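/- In the modified model with α + β + 2 > γ and β + 2 < γ, the threshold λ_c^#(k_max) = (∫_{k_min}^{k_max} k^{β+1−γ} dk)/(∫_{k_min}^{k_max} k^{α+β+1−γ} dk) tends to 0 as k_max → ∞; more precisely it is asymptotic to k_min^{−α}·((α+β+2−γ)/(γ−β−2))·(k_max/k_min)^{γ−α−β−2}. -/

import Mathlib

open intervalIntegral Filter

private lemma stmt_8_alg (A B Cc D q1 q2 : ℝ) (hB : B ≠ 0) (hq1 : q1 ≠ 0) (hq2 : q2 ≠ 0)
    (hCc : Cc ≠ 0) (hD : D ≠ 0) (hCD : Cc - D ≠ 0) :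
    ((A - B) / q1) / ((Cc - D) / q2) / (B / D * (q2 / -q1) * (D / Cc)) =
      (1 - A / B) / (1 - D / Cc) := by
  have h1 : 1 - D / Cc = (Cc - D) / Cc := by field_simp
  rw [h1]
  field_simp
  ring

/-- If β + 2 < γ < α + β + 2 then λ_c^#(k_max) → 0 as k_max → ∞; more precisely it
is asymptotic to k_min^{−α}·((α+β+2−γ)/(γ−β−2))·(k_max/k_min)^{γ−α−β−2}. -/
theorem stmt_8 (kmin γ α β : ℝ) (hkmin : 0 < kmin) (hγ2 : 2 < γ)
    (hα0 : 0 < α) (hα1 : α ≤ 1) (hβγ : β + 2 < γ) (hcond : γ < α + β + 2) :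
    Tendsto (fun kmax : ℝ =>
        (∫ k in kmin..kmax, k ^ (β + 1 - γ)) / (∫ k in kmin..kmax, k ^ (α + β + 1 - γ)))
      atTop (nhds 0) ∧
    Tendsto (fun kmax : ℝ =>
        ((∫ k in kmin..kmax, k ^ (β + 1 - γ)) / (∫ k in kmin..kmax, k ^ (α + β + 1 - γ))) /
          (kmin ^ (-α) * ((α + β + 2 - γ) / (γ - β - 2)) * (kmax / kmin) ^ (γ - α - β - 2)))
      atTop (nhds 1) := by
  have hq1 : β + 2 - γ < 0 := by linarith
  have hq2 : 0 < α + β + 2 - γ := by linarith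
  -- the model function tends to 1
  have h1 : Tendsto (fun x : ℝ => x ^ (β + 2 - γ)) atTop (nhds 0) := by
    have := tendsto_rpow_neg_atTop (y := -(β + 2 - γ)) (by linarith)
    simpa using this
  have h2 : Tendsto (fun x : ℝ => kmin ^ (α + β + 2 - γ) / x ^ (α + β + 2 - γ))
      atTop (nhds 0) :=
    tendsto_const_nhds.div_atTop (tendsto_rpow_atTop hq2)
  have hmodel : Tendsto (fun x : ℝ =>
      (1 - x ^ (β + 2 - γ) / kmin ^ (β + 2 - γ)) /
        (1 - kmin ^ (α + β + 2 - γ) / x ^ (α + β + 2 - γ))) atTop (nhds 1) := by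
    have hn : Tendsto (fun x : ℝ => 1 - x ^ (β + 2 - γ) / kmin ^ (β + 2 - γ))
        atTop (nhds 1) := by
      have := (h1.div_const (kmin ^ (β + 2 - γ))).const_sub 1
      simpa using this
    have hd : Tendsto (fun x : ℝ =>
        1 - kmin ^ (α + β + 2 - γ) / x ^ (α + β + 2 - γ)) atTop (nhds 1) := by
      have := h2.const_sub 1
      simpa using this
    have := hn.div hd one_ne_zero
    rw [div_one] at this
    exact this
  -- eventual equality : ratio / target = model
  have heq : (fun x : ℝ =>
      ((∫ k in kmin..x, k ^ (β + 1 - γ)) / (∫ k in kmin..x, k ^ (α + β + 1 - γ))) /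
        (kmin ^ (-α) * ((α + β + 2 - γ) / (γ - β - 2)) * (x / kmin) ^ (γ - α - β - 2)))
      =ᶠ[atTop] (fun x : ℝ =>
      (1 - x ^ (β + 2 - γ) / kmin ^ (β + 2 - γ)) /
        (1 - kmin ^ (α + β + 2 - γ) / x ^ (α + β + 2 - γ))) := by
    filter_upwards [eventually_gt_atTop kmin] with x hx
    have hx0 : 0 < x := lt_trans hkmin hx
    have hnm : (0:ℝ) ∉ Set.uIcc kmin x := Set.notMem_uIcc_of_lt hkmin hx0
    have hI1 : (∫ k in kmin..x, k ^ (β + 1 - γ)) =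
        (x ^ (β + 2 - γ) - kmin ^ (β + 2 - γ)) / (β + 2 - γ) := by
      rw [integral_rpow (Or.inr ⟨ne_of_lt (by linarith), hnm⟩),
        show β + 1 - γ + 1 = β + 2 - γ by ring]
    have hI2 : (∫ k in kmin..x, k ^ (α + β + 1 - γ)) =
        (x ^ (α + β + 2 - γ) - kmin ^ (α + β + 2 - γ)) / (α + β + 2 - γ) := by
      rw [integral_rpow (Or.inr ⟨ne_of_gt (by linarith), hnm⟩),
        show α + β + 1 - γ + 1 = α + β + 2 - γ by ring]
    have hkα : kmin ^ (-α) = kmin ^ (β + 2 - γ) / kmin ^ (α + β + 2 - γ) := by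
      rw [← Real.rpow_sub hkmin]
      congr 1
      ring
    have hdivpow : (x / kmin) ^ (γ - α - β - 2) =
        kmin ^ (α + β + 2 - γ) / x ^ (α + β + 2 - γ) := by
      have h : γ - α - β - 2 = -(α + β + 2 - γ) := by ring
      rw [h, Real.div_rpow hx0.le hkmin.le, Real.rpow_neg hx0.le, Real.rpow_neg hkmin.le]
      field_simp
    have hγβ : γ - β - 2 = -(β + 2 - γ) := by ring
    have hB : (0:ℝ) < kmin ^ (β + 2 - γ) := Real.rpow_pos_of_pos hkmin _
    have hD : (0:ℝ) < kmin ^ (α + β + 2 - γ) := Real.rpow_pos_of_pos hkmin _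
    have hC : (0:ℝ) < x ^ (α + β + 2 - γ) := Real.rpow_pos_of_pos hx0 _
    have hCD : kmin ^ (α + β + 2 - γ) < x ^ (α + β + 2 - γ) :=
      Real.rpow_lt_rpow hkmin.le hx hq2
    rw [hI1, hI2, hkα, hdivpow, hγβ]
    exact stmt_8_alg _ _ _ _ _ _ hB.ne' (by linarith) (by linarith) hC.ne' hD.ne'
      (sub_ne_zero_of_ne hCD.ne')
  have key := hmodel.congr' heq.symm
  refine ⟨?_, key⟩
  -- first part : ratio = (ratio/target) * target, target → 0
  have htarget : Tendsto (fun x : ℝ =>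
      kmin ^ (-α) * ((α + β + 2 - γ) / (γ - β - 2)) * (x / kmin) ^ (γ - α - β - 2))
      atTop (nhds 0) := by
    have h3 : Tendsto (fun x : ℝ => (x / kmin) ^ (γ - α - β - 2)) atTop (nhds 0) := by
      have hdiv : Tendsto (fun x : ℝ => x / kmin) atTop atTop :=
        Tendsto.atTop_div_const hkmin tendsto_id
      have := tendsto_rpow_neg_atTop (y := -(γ - α - β - 2)) (by linarith)
      simp only [neg_neg] at this
      exact this.comp hdiv
    have := h3.const_mul (kmin ^ (-α) * ((α + β + 2 - γ) / (γ - β - 2)))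
    simpa [mul_assoc] using this
  have hm := key.mul htarget
  rw [one_mul] at hm
  refine hm.congr' ?_
  filter_upwards [eventually_gt_atTop kmin] with x hx
  have hx0 : 0 < x := lt_trans hkmin hx
  have hne : kmin ^ (-α) * ((α + β + 2 - γ) / (γ - β - 2)) * (x / kmin) ^ (γ - α - β - 2)
      ≠ 0 := by
    have h1 : (0:ℝ) < kmin ^ (-α) := Real.rpow_pos_of_pos hkmin _
    have h2' : (0:ℝ) < (α + β + 2 - γ) / (γ - β - 2) := div_pos hq2 (by linarith)
    have h3 : (0:ℝ) < (x / kmin) ^ (γ - α - β - 2) :=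
      Real.rpow_pos_of_pos (div_pos hx0 hkmin) _
    positivity
  exact div_mul_cancel₀ _ hne
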